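/- Smoothed indicator shift bound: let s : X → ℝ be L-Lipschitz, P, Q probability measures on X with W₁(P,Q) ≤ ε, and let t ∈ ℝ, h > 0. Then Q(s > t + h) ≤ P(s > t) + Lε/h. In particular, worst-case exceedance over the Wasserstein ball of radius ε is controlled by the calibration-distribution exceedance at a slightly smaller threshold plus Lε/h. -/

import Mathlib

open MeasureTheory

/-- Smoothed indicator shift bound: exceedance under a Wasserstein-shifted distribution
at threshold `t + h` is controlled by exceedance under the reference distribution at
threshold `t`, plus `L ε / h`. -/
theorem smoothed_indicator_shift_bound
    {X : Type*} [MetricSpace X] [MeasurableSpace X] [BorelSpace X]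
    (P Q : Measure X) [IsProbabilityMeasure P] [IsProbabilityMeasure Q]
    (ε : ℝ) (hε : 0 ≤ ε)
    (hW : ∀ g : X → ℝ, LipschitzWith 1 g → |∫ x, g x ∂P - ∫ x, g x ∂Q| ≤ ε)
    (L : NNReal) (s : X → ℝ) (hs : LipschitzWith L s)
    (t h : ℝ) (hh : 0 < h) :
    (Q {x | t + h < s x}).toReal ≤ (P {x | t < s x}).toReal + (L : ℝ) * ε / h := by
  have hscont : Continuous s := hs.continuous
  have hA : MeasurableSet {x : X | t + h < s x} :=
    (isOpen_lt continuous_const hscont).measurableSet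
  have hB : MeasurableSet {x : X | t < s x} :=
    (isOpen_lt continuous_const hscont).measurableSet
  rcases eq_or_lt_of_le (show (0:NNReal) ≤ L from zero_le) with hL | hL
  · -- L = 0 : s is constant
    have hconst : ∀ x y : X, s x = s y := by
      intro x y
      have := hs x y
      rw [← hL] at this
      simpa [edist_le_zero] using this
    -- both measures are of sets univ or ∅ depending on a point
    have hXne : Nonempty X := by
      by_contra hne
      have : Q Set.univ = 1 := measure_univ
      rw [Set.univ_eq_empty_iff.mpr (not_nonempty_iff.mp hne)] at this
      simp at this
    obtain ⟨x0⟩ := hXne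
    have hLε : (L : ℝ) * ε / h = 0 := by rw [← hL]; simp
    rw [hLε, add_zero]
    by_cases hx0 : t + h < s x0
    · have hQ : {x : X | t + h < s x} = Set.univ := by
        ext x; simp [← hconst x0 x, hx0]
      have hP : {x : X | t < s x} = Set.univ := by
        ext x; simp [← hconst x0 x]
        linarith
      rw [hQ, hP]; simp
    · have hQ : {x : X | t + h < s x} = ∅ := by
        ext x; simp [← hconst x0 x, hx0]
      rw [hQ]
      simp [ENNReal.toReal_nonneg]
  · -- L > 0
    have hL' : (0:ℝ) < L := hL
    set c : ℝ := h / L with hc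
    have hcpos : 0 < c := div_pos hh hL'
    set g : X → ℝ := fun x => min c (max 0 ((s x - t) / L)) with hg
    have hglip : LipschitzWith 1 g := by
      refine LipschitzWith.of_dist_le_mul fun x y => ?_
      rw [NNReal.coe_one, one_mul, Real.dist_eq]
      calc |g x - g y| ≤ |max 0 ((s x - t) / L) - max 0 ((s y - t) / L)| := by
            simpa [min_comm] using abs_min_sub_min_le_max c (max 0 ((s x - t) / L))
              c (max 0 ((s y - t) / L)) |>.trans (by simp)
        _ ≤ |(s x - t) / L - (s y - t) / L| := by
            simpa [max_comm] using abs_max_sub_max_le_abs ((s x - t)/L) ((s y - t)/L) 0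
        _ = |s x - s y| / L := by rw [div_sub_div_same, abs_div, abs_of_pos hL']; ring_nf
        _ ≤ dist x y := by
            rw [div_le_iff₀ hL']
            have := hs.dist_le_mul x y
            rw [Real.dist_eq] at this
            linarith [this]
    -- sandwich: c * ind_A ≤ g ≤ c * ind_B
    have hlow : ∀ x, Set.indicator {x : X | t + h < s x} (fun _ => c) x ≤ g x := by
      intro x
      by_cases hx : t + h < s x
      · rw [Set.indicator_of_mem (show x ∈ {x : X | t + h < s x} from hx)]
        have h1 : c ≤ (s x - t) / L := by
          rw [hc, div_le_div_iff₀ hL' hL']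
          nlinarith
        simp only [hg]
        rw [min_eq_left (le_max_of_le_right h1)]
      · rw [Set.indicator_of_notMem (show x ∉ {x : X | t + h < s x} from hx)]
        exact le_min hcpos.le (le_max_left _ _)
    have hup : ∀ x, g x ≤ Set.indicator {x : X | t < s x} (fun _ => c) x := by
      intro x
      by_cases hx : t < s x
      · rw [Set.indicator_of_mem (show x ∈ {x : X | t < s x} from hx)]; exact min_le_left _ _
      · rw [Set.indicator_of_notMem (show x ∉ {x : X | t < s x} from hx)]
        simp only [hg]
        have : (s x - t) / L ≤ 0 := div_nonpos_of_nonpos_of_nonneg (by push_neg at hx; linarith) hL'.le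
        rw [max_eq_left this]
        exact min_le_right _ _
    have hgmeas : ∀ (μ : Measure X) [IsFiniteMeasure μ], Integrable g μ := fun μ _ => by
      have : ∀ x, ‖g x‖ ≤ c := fun x => by
        rw [Real.norm_eq_abs, abs_le]
        constructor
        · have := le_min hcpos.le (le_max_left 0 ((s x - t)/L))
          simp only [hg]; linarith [this]
        · exact min_le_left _ _
      exact (integrable_const c).mono' hglip.continuous.aestronglyMeasurable
        (Filter.Eventually.of_forall this)
    have hIA : Integrable (Set.indicator {x : X | t + h < s x} (fun _ => c)) Q :=
      (integrable_const c).indicator hA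
    have hIB : Integrable (Set.indicator {x : X | t < s x} (fun _ => c)) P :=
      (integrable_const c).indicator hB
    have e1 : ∫ x, Set.indicator {x : X | t + h < s x} (fun _ => c) x ∂Q
        = c * (Q {x | t + h < s x}).toReal := by
      rw [integral_indicator_const c hA]; simp [mul_comm, measureReal_def]
    have e2 : ∫ x, Set.indicator {x : X | t < s x} (fun _ => c) x ∂P
        = c * (P {x | t < s x}).toReal := by
      rw [integral_indicator_const c hB]; simp [mul_comm, measureReal_def]
    have i1 : c * (Q {x | t + h < s x}).toReal ≤ ∫ x, g x ∂Q := by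
      rw [← e1]; exact integral_mono hIA (hgmeas Q) hlow
    have i2 : ∫ x, g x ∂P ≤ c * (P {x | t < s x}).toReal := by
      rw [← e2]; exact integral_mono (hgmeas P) hIB hup
    have i3 : ∫ x, g x ∂Q - ∫ x, g x ∂P ≤ ε := by
      have := hW g hglip
      rw [abs_le] at this
      linarith [this.1]
    have key : c * (Q {x | t + h < s x}).toReal ≤ c * (P {x | t < s x}).toReal + ε := by
      linarith
    rw [← mul_le_mul_iff_right₀ hcpos, mul_add]
    calc c * (Q {x | t + h < s x}).toReal ≤ c * (P {x | t < s x}).toReal + ε := key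
      _ = c * (P {x | t < s x}).toReal + c * ((L:ℝ) * ε / h) := by
          rw [hc]; field_simp
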